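/- Let W_1 ≥ W_2 ≥ ... ≥ W_N be reals, ρ_1,...,ρ_N ∈ (0,1) with ∑_{i=1}^N ρ_i = M for an integer 1 ≤ M < N. Set ε = min(min_i ρ_i, 1 − max_i ρ_i) > 0. Then ∑_{i=1}^M W_i(ρ_i − 1) + ∑_{i=M+1}^N W_i ρ_i ≤ −ε(W_1 − W_N). -/
import Mathlib


open Finset

/-- Key drift inequality for the VWD policy: with sorted weights and scheduling
fractions `ρ_i ∈ (0,1)` summing to `M`, the weighted drift is at most `−ε(W₁ − W_N)`
where `ε = min(min_i ρ_i, 1 − max_i ρ_i)`. -/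
theorem vwd_drift_inequality
    (N M : ℕ) (hM : 0 < M) (hMN : M < N) (W ρ : ℕ → ℝ)
    (hW : ∀ i ∈ Finset.Icc 1 (N - 1), W (i + 1) ≤ W i)
    (hρ : ∀ i ∈ Finset.Icc 1 N, ρ i ∈ Set.Ioo (0 : ℝ) 1)
    (hsum : ∑ i ∈ Finset.Icc 1 N, ρ i = M)
    (ε : ℝ)
    (hε : ε = min ((Finset.Icc 1 N).inf' (Finset.nonempty_Icc.mpr (by omega)) ρ)
        (1 - (Finset.Icc 1 N).sup' (Finset.nonempty_Icc.mpr (by omega)) ρ)) :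
    ∑ i ∈ Finset.Icc 1 M, W i * (ρ i - 1) + ∑ i ∈ Finset.Icc (M + 1) N, W i * ρ i
      ≤ -ε * (W 1 - W N) := by
  have hmono : ∀ i j : ℕ, 1 ≤ i → i ≤ j → j ≤ N → W j ≤ W i := by
    intro i j h1 hij hjN
    induction j, hij using Nat.le_induction with
    | base => exact le_refl _
    | succ n hn ih =>
      have h1' := hW n (by simp [Finset.mem_Icc]; omega)
      have h2' := ih (by omega)
      linarith
  have hεlo : ∀ i ∈ Finset.Icc 1 N, ε ≤ ρ i := by
    intro i hi
    calc ε ≤ (Finset.Icc 1 N).inf' (Finset.nonempty_Icc.mpr (by omega)) ρ := by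
            rw [hε]; exact min_le_left _ _
      _ ≤ ρ i := Finset.inf'_le _ hi
  have hεhi : ∀ i ∈ Finset.Icc 1 N, ρ i ≤ 1 - ε := by
    intro i hi
    have h1 : ε ≤ 1 - (Finset.Icc 1 N).sup' (Finset.nonempty_Icc.mpr (by omega)) ρ := by
      rw [hε]; exact min_le_right _ _
    have h2 : ρ i ≤ (Finset.Icc 1 N).sup' (Finset.nonempty_Icc.mpr (by omega)) ρ :=
      Finset.le_sup' _ hi
    linarith
  -- split the sum over Icc 1 N at M
  have hsplit : (∑ i ∈ Finset.Icc 1 M, ρ i) + ∑ i ∈ Finset.Icc (M+1) N, ρ i = M := by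
    rw [← hsum]
    rw [show Finset.Icc 1 M = Finset.Ioc 0 M from Finset.Icc_add_one_left_eq_Ioc 0 M,
        show Finset.Icc (M+1) N = Finset.Ioc M N from Finset.Icc_add_one_left_eq_Ioc M N,
        show Finset.Icc 1 N = Finset.Ioc 0 N from Finset.Icc_add_one_left_eq_Ioc 0 N]
    exact Finset.sum_Ioc_consecutive _ (Nat.zero_le M) (le_of_lt hMN)
  -- peel off the first term of the first sum
  have h1M : Finset.Icc 1 M = insert 1 (Finset.Icc 2 M) := by
    ext i
    simp only [Finset.mem_Icc, Finset.mem_insert]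
    omega
  have hNe : N = (N - 1) + 1 := by omega
  have htop : ∀ f : ℕ → ℝ, ∑ i ∈ Finset.Icc (M+1) N, f i
      = (∑ i ∈ Finset.Icc (M+1) (N-1), f i) + f N := by
    intro f
    conv_lhs => rw [hNe]
    rw [Finset.sum_Icc_succ_top (by omega), ← hNe]
  have h1ni : (1 : ℕ) ∉ Finset.Icc 2 M := by simp
  -- abbreviations
  set A : ℝ := ∑ i ∈ Finset.Icc 2 M, (ρ i - 1) with hA
  set B : ℝ := ∑ i ∈ Finset.Icc (M+1) (N-1), ρ i with hB
  have hAle : A ≤ 0 := by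
    apply Finset.sum_nonpos
    intro i hi
    have := (hρ i (by simp only [Finset.mem_Icc] at hi ⊢; omega)).2
    linarith
  have hBge : 0 ≤ B := by
    apply Finset.sum_nonneg
    intro i hi
    have := (hρ i (by simp only [Finset.mem_Icc] at hi ⊢; omega)).1
    linarith
  -- balance equation
  have hbal : (ρ 1 - 1) + A + B + ρ N = 0 := by
    have hS1 : ∑ i ∈ Finset.Icc 1 M, (ρ i - 1)
        = (∑ i ∈ Finset.Icc 1 M, ρ i) - M := by
      rw [Finset.sum_sub_distrib]
      simp [Nat.card_Icc]
    have e1 : ∑ i ∈ Finset.Icc 1 M, (ρ i - 1) = (ρ 1 - 1) + A := by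
      rw [h1M, Finset.sum_insert h1ni]
    have e2 : ∑ i ∈ Finset.Icc (M+1) N, ρ i = B + ρ N := htop ρ
    have := hsplit
    rw [e2] at this
    nlinarith [hS1, e1]
  -- bound the two weighted sums
  have hb1 : ∑ i ∈ Finset.Icc 1 M, W i * (ρ i - 1)
      ≤ W 1 * (ρ 1 - 1) + W M * A := by
    rw [h1M, Finset.sum_insert h1ni, hA, Finset.mul_sum]
    have hle : ∑ i ∈ Finset.Icc 2 M, W i * (ρ i - 1)
        ≤ ∑ i ∈ Finset.Icc 2 M, W M * (ρ i - 1) := by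
      apply Finset.sum_le_sum
      intro i hi
      simp only [Finset.mem_Icc] at hi
      have hWi : W M ≤ W i := hmono i M (by omega) hi.2 (by omega)
      have hρi := (hρ i (by simp only [Finset.mem_Icc]; omega)).2
      nlinarith
    linarith
  have hb2 : ∑ i ∈ Finset.Icc (M+1) N, W i * ρ i
      ≤ W (M+1) * B + W N * ρ N := by
    rw [htop (fun i => W i * ρ i), hB, Finset.mul_sum]
    have hle : ∑ i ∈ Finset.Icc (M+1) (N-1), W i * ρ i
        ≤ ∑ i ∈ Finset.Icc (M+1) (N-1), W (M+1) * ρ i := by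
      apply Finset.sum_le_sum
      intro i hi
      simp only [Finset.mem_Icc] at hi
      have hWi : W i ≤ W (M+1) := hmono (M+1) i (by omega) hi.1 (by omega)
      have hρi := (hρ i (by simp only [Finset.mem_Icc]; omega)).1
      nlinarith
    linarith
  -- key weight facts
  have hW1M : W M ≤ W 1 := hmono 1 M (by omega) hM (by omega)
  have hWM1 : W (M+1) ≤ W M := hmono M (M+1) (by omega) (by omega) (by omega)
  have hWMN : W N ≤ W M := hmono M N (by omega) (by omega) (le_refl _)
  have hW1N : W N ≤ W 1 := hmono 1 N (by omega) (by omega) (le_refl _)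
  have hεN : ε ≤ ρ N := hεlo N (by simp only [Finset.mem_Icc]; omega)
  have hε1 : ρ 1 ≤ 1 - ε := hεhi 1 (by simp only [Finset.mem_Icc]; omega)
  have hρN : ρ N = 1 - ρ 1 - A - B := by linarith
  have hεN' : ε ≤ 1 - ρ 1 - A - B := by linarith
  have key : W 1 * (ρ 1 - 1) + W M * A + W (M+1) * B + W N * ρ N
      ≤ -ε * (W 1 - W N) := by
    rw [hρN]
    rcases le_or_gt 0 (A + B) with hAB | hAB
    · nlinarith [mul_nonneg hBge (sub_nonneg.mpr hWM1),
        mul_nonneg hAB (sub_nonneg.mpr hW1M),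
        mul_nonneg (by linarith : (0:ℝ) ≤ 1 - ρ 1 - A - B - ε) (sub_nonneg.mpr hW1N)]
    · nlinarith [mul_nonneg hBge (sub_nonneg.mpr hWM1),
        mul_nonneg (neg_nonneg.mpr (le_of_lt hAB)) (sub_nonneg.mpr hWMN),
        mul_nonneg (by linarith : (0:ℝ) ≤ 1 - ρ 1 - ε) (sub_nonneg.mpr hW1N)]
  linarith [hb1, hb2]
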